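/- Let A be a commutative Noetherian ring and let I be a reflexive ideal of A that contains a nonzerodivisor of A and satisfies (I : I) = A. Then grade_A(tr_A(I)) ≥ 2, where tr_A(I) = (A : I)I is the trace ideal of I. -/

import Mathlib

set_option maxHeartbeats 1000000
set_option synthInstance.maxHeartbeats 400000

open CategoryTheory

universe u

/-- The `i`-th Ext module `Ext_A^i(M, N)` over a commutative ring `A`. -/
noncomputable def ExtModule (A : Type u) [CommRing A] (M N : Type u)
    [AddCommGroup M] [Module A M] [AddCommGroup N] [Module A N] (i : ℕ) : ModuleCat.{u} A :=
  ((Ext A (ModuleCat.{u} A) i).obj (Opposite.op (ModuleCat.of A M))).obj (ModuleCat.of A N)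

/-- A module is torsion-free if nonzerodivisors of the ring act injectively. -/
def IsTorsionFreeModule (A : Type*) [CommRing A] (M : Type*) [AddCommGroup M]
    [Module A M] : Prop :=
  ∀ a ∈ nonZeroDivisors A, ∀ m : M, a • m = 0 → m = 0

/-- The grade of an ideal `J`: the length of a maximal regular sequence contained in `J`. -/
noncomputable def Ideal.grade {A : Type*} [CommRing A] (J : Ideal A) : ℕ∞ :=
  sSup {n : ℕ∞ | ∃ rs : List A, (rs.length : ℕ∞) = n ∧ (∀ r ∈ rs, r ∈ J) ∧
    RingTheory.Sequence.IsWeaklyRegular A rs}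

/-- A Cohen–Macaulay local ring: Noetherian local with depth equal to Krull dimension. -/
def IsCohenMacaulayLocalRing (A : Type*) [CommRing A] : Prop :=
  IsNoetherianRing A ∧ ∃ _ : IsLocalRing A,
    ((IsLocalRing.maximalIdeal A).grade : WithBot ℕ∞) = ringKrullDim A

/-- A Cohen–Macaulay ring: Noetherian, all localizations at primes are CM local rings. -/
def IsCohenMacaulayRing (A : Type*) [CommRing A] : Prop :=
  IsNoetherianRing A ∧ ∀ (p : Ideal A) [p.IsPrime],
    IsCohenMacaulayLocalRing (Localization.AtPrime p)

/-- A Gorenstein local ring: Noetherian local of finite self-injective dimension,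
expressed via vanishing of `Ext^{n+1}(A/I, A)` for all ideals `I` (Baer's criterion). -/
def IsGorensteinLocalRing (A : Type u) [CommRing A] : Prop :=
  IsLocalRing A ∧ IsNoetherianRing A ∧
    ∃ n : ℕ, ∀ I : Ideal A, Subsingleton (ExtModule A (A ⧸ I) A (n + 1))

/-- A Gorenstein ring: Noetherian, all localizations at maximal ideals are Gorenstein local. -/
def IsGorensteinRing (A : Type u) [CommRing A] : Prop :=
  IsNoetherianRing A ∧ ∀ (m : Ideal A) [m.IsMaximal],
    IsGorensteinLocalRing (Localization.AtPrime m)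

/-- Generically Gorenstein: the localization at every associated prime is Gorenstein. -/
def IsGenericallyGorenstein (A : Type u) [CommRing A] : Prop :=
  ∀ (p : Ideal A) [p.IsPrime], p ∈ associatedPrimes A A →
    IsGorensteinLocalRing (Localization.AtPrime p)

/-- The trace ideal of a module: the sum of the images of all linear maps to the ring. -/
def traceIdeal (A : Type*) [CommRing A] (M : Type*) [AddCommGroup M] [Module A M] :
    Ideal A :=
  ⨆ f : M →ₗ[A] A, LinearMap.range f

/-- The image of an ideal inside the total ring of fractions. -/
noncomputable def Ideal.toFrac {A : Type u} [CommRing A] (I : Ideal A) :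
    Submodule A (FractionRing A) :=
  Submodule.map (Algebra.linearMap A (FractionRing A)) I

/-- The conductor `(R : S)` of a birational extension `R ⊆ S ⊆ Q(R)`,
as a submodule of the total ring of fractions. -/
noncomputable def conductorFrac (R : Type u) [CommRing R]
    (S : Subalgebra R (FractionRing R)) : Submodule R (FractionRing R) :=
  (1 : Submodule R (FractionRing R)) / Subalgebra.toSubmodule S

/-- `M ∈ Ω CM(A)`: there is an exact sequence `0 → M → P → N → 0` with `P` a finitely
generated projective `A`-module and `N` a finitely generated torsion-free
(equivalently, over a 1-dimensional CM ring, maximal Cohen–Macaulay) `A`-module. -/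
def InSyzygyOfCM (A : Type u) [CommRing A] (M : Type u) [AddCommGroup M] [Module A M] :
    Prop :=
  ∃ (P N : Type u) (_ : AddCommGroup P) (_ : Module A P) (_ : AddCommGroup N)
    (_ : Module A N), Module.Projective A P ∧ Module.Finite A P ∧ Module.Finite A N ∧
      IsTorsionFreeModule A N ∧
      ∃ (f : M →ₗ[A] P) (g : P →ₗ[A] N),
        Function.Injective f ∧ Function.Surjective g ∧ LinearMap.range f = LinearMap.ker g

section MyAssoc
universe v
variable {dummy : Type v}
end MyAssoc


section AssocPrimeFiniteness

variable {R : Type u} [CommRing R] {M : Type*} [AddCommGroup M] [Module R M]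

lemma my_assoc_sub_or_quot [IsNoetherianRing R] (N : Submodule R M) {p : Ideal R}
    (hp : IsAssociatedPrime p M) :
    IsAssociatedPrime p N ∨ IsAssociatedPrime p (M ⧸ N) := by
  obtain ⟨hprime, x, hx⟩ := isAssociatedPrime_iff.mp hp
  have hmem : ∀ t : R, t ∈ p ↔ t • x = 0 := by
    intro t; rw [hx, Submodule.mem_colon_singleton, Submodule.mem_bot]
  by_cases hc : ∃ c : R, c • x ∈ N ∧ c • x ≠ 0
  · left
    obtain ⟨c, hcN, hc0⟩ := hc
    have hcp : c ∉ p := fun h => hc0 ((hmem c).mp h)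
    refine isAssociatedPrime_iff.mpr ⟨hprime, ⟨c • x, hcN⟩, ?_⟩
    ext t
    rw [Submodule.mem_colon_singleton, Submodule.mem_bot]
    constructor
    · intro ht
      have : t • (c • x) = 0 := by
        rw [smul_comm, (hmem t).mp ht, smul_zero]
      exact Subtype.ext (by simpa using this)
    · intro ht
      have h2 : (t * c) • x = 0 := by
        have := congrArg (Subtype.val) ht
        simpa [mul_smul] using this
      rcases hprime.mem_or_mem ((hmem (t * c)).mpr h2) with h | h
      · exact h
      · exact absurd h hcp
  · right
    push_neg at hc
    refine isAssociatedPrime_iff.mpr ⟨hprime, Submodule.Quotient.mk x, ?_⟩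
    ext t
    rw [Submodule.mem_colon_singleton, Submodule.mem_bot, ← Submodule.Quotient.mk_smul,
      Submodule.Quotient.mk_eq_zero]
    constructor
    · intro ht
      rw [(hmem t).mp ht]; exact N.zero_mem
    · intro ht
      exact (hmem t).mpr (hc t ht)

lemma my_assoc_span_singleton [IsNoetherianRing R] {p : Ideal R} (hprime : p.IsPrime) (x : M)
    (hx : p = (Submodule.span R {x}).annihilator) :
    associatedPrimes R (Submodule.span R {x}) ⊆ {p} := by
  intro q hq'
  obtain ⟨hq, z, hz⟩ := isAssociatedPrime_iff.mp hq'
  have hmem : ∀ t : R, t ∈ p ↔ t • x = 0 := by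
    intro t; rw [hx, Submodule.mem_annihilator_span_singleton]
  obtain ⟨c, hc⟩ := Submodule.mem_span_singleton.mp z.2
  have hz0 : (z : M) ≠ 0 := by
    intro h0
    apply hq.ne_top
    rw [hz, Ideal.eq_top_iff_one, Submodule.mem_colon_singleton, one_smul, Submodule.mem_bot]
    exact Subtype.ext h0
  have hcx : c • x ≠ 0 := fun h => hz0 (by rw [← hc]; exact h)
  have hcp : c ∉ p := fun h => hcx ((hmem c).mp h)
  have hqmem : ∀ t : R, t ∈ q ↔ (t * c) • x = 0 := by
    intro t
    rw [hz, Submodule.mem_colon_singleton, Submodule.mem_bot]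
    constructor
    · intro ht
      have := congrArg (Subtype.val) ht
      simpa [mul_smul, hc] using this
    · intro ht
      apply Subtype.ext
      simpa [mul_smul, hc] using ht
  have : q = p := by
    ext t
    rw [hqmem t]
    constructor
    · intro ht
      rcases hprime.mem_or_mem ((hmem (t * c)).mpr ht) with h | h
      · exact h
      · exact absurd h hcp
    · intro ht
      rw [show t * c = c * t from mul_comm t c, mul_smul, (hmem t).mp ht, smul_zero]
  exact this

lemma my_associatedPrimes_finite (R : Type u) (M : Type*) [CommRing R] [IsNoetherianRing R]
    [AddCommGroup M] [Module R M] [Module.Finite R M] :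
    (associatedPrimes R M).Finite := by
  haveI : IsNoetherian R M := isNoetherian_of_isNoetherianRing_of_finite R M
  obtain ⟨N, hN, hmax⟩ := (set_has_maximal_iff_noetherian.mpr ‹IsNoetherian R M›)
      {N : Submodule R M | (associatedPrimes R N).Finite}
      ⟨⊥, by
        have : associatedPrimes R (⊥ : Submodule R M) = ∅ :=
          associatedPrimes.eq_empty_of_subsingleton
        simp only [Set.mem_setOf_eq, this]
        exact Set.finite_empty⟩
  by_cases hNtop : N = ⊤
  · subst hNtop
    have := LinearEquiv.AssociatedPrimes.eq (Submodule.topEquiv (R := R) (M := M))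
    rw [← this]
    exact hN
  · exfalso
    haveI : Nontrivial (M ⧸ N) :=
      Submodule.Quotient.nontrivial_iff.mpr hNtop
    obtain ⟨p, hp⟩ := associatedPrimes.nonempty R (M ⧸ N)
    obtain ⟨hpp, xq, hxq⟩ := isAssociatedPrime_iff.mp hp
    obtain ⟨x, rfl⟩ := Submodule.Quotient.mk_surjective N xq
    set N' : Submodule R M := N ⊔ Submodule.span R {x} with hN'def
    have hxN : x ∉ N := by
      intro h
      apply hpp.ne_top
      rw [hxq, Ideal.eq_top_iff_one, Submodule.mem_colon_singleton, one_smul, Submodule.mem_bot,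
        Submodule.Quotient.mk_eq_zero]
      exact h
    have hle : N ≤ N' := le_sup_left
    have hlt : N < N' := by
      refine lt_of_le_of_ne hle (fun h => hxN ?_)
      rw [h]
      exact (le_sup_right : Submodule.span R {x} ≤ N ⊔ Submodule.span R {x}) (Submodule.mem_span_singleton_self x)
    have key : associatedPrimes R N' ⊆ associatedPrimes R N ∪ {p} := by
      intro q hq
      rcases my_assoc_sub_or_quot (Submodule.comap N'.subtype N) hq with h | h
      · left
        exact ((Submodule.comapSubtypeEquivOfLe hle).isAssociatedPrime_iff).mp h
      · right
        set f : N' →ₗ[R] M ⧸ N := N.mkQ.comp N'.subtype with hfdef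
        have hker : LinearMap.ker f = Submodule.comap N'.subtype N := by
          rw [hfdef, LinearMap.ker_comp, Submodule.ker_mkQ]
        have hrange : LinearMap.range f = Submodule.span R {Submodule.Quotient.mk x} := by
          rw [hfdef, LinearMap.range_comp, Submodule.range_subtype, hN'def,
            Submodule.map_sup, Submodule.map_span]
          have h1 : Submodule.map N.mkQ N = ⊥ := by
            rw [Submodule.eq_bot_iff]
            rintro y ⟨z, hz, rfl⟩
            simpa [Submodule.Quotient.mk_eq_zero] using hz
          rw [h1, bot_sup_eq, Set.image_singleton]
          rfl
        rw [← hker] at h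
        have h2 := ((LinearMap.quotKerEquivRange f).isAssociatedPrime_iff).mp h
        rw [hrange] at h2
        exact my_assoc_span_singleton hpp _ (by
          rw [hxq]; ext t
          rw [Submodule.mem_colon_singleton, Submodule.mem_bot,
            Submodule.mem_annihilator_span_singleton]) h2
    exact hmax N' ((hN.union (Set.finite_singleton p)).subset key) hlt

end AssocPrimeFiniteness


section FracAux

open Pointwise

variable {A : Type u} [CommRing A]

/-- The inverse in `FractionRing A` of the image of a nonzerodivisor. -/
noncomputable def invA (a : A) (ha : a ∈ nonZeroDivisors A) : FractionRing A :=
  ↑(IsLocalization.map_units (M := nonZeroDivisors A) (FractionRing A) ⟨a, ha⟩).unit⁻¹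

lemma invA_mul (a : A) (ha : a ∈ nonZeroDivisors A) :
    algebraMap A (FractionRing A) a * invA a ha = 1 := by
  have h := (IsLocalization.map_units (M := nonZeroDivisors A) (FractionRing A)
    ⟨a, ha⟩).unit.mul_inv
  rwa [IsUnit.unit_spec] at h

lemma mem_toFrac {I : Ideal A} {x : FractionRing A} :
    x ∈ I.toFrac ↔ ∃ i ∈ I, algebraMap A (FractionRing A) i = x := by
  constructor
  · rintro ⟨i, hi, rfl⟩; exact ⟨i, hi, rfl⟩
  · rintro ⟨i, hi, rfl⟩; exact ⟨i, hi, rfl⟩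

/-- Lift a linear map into `A·1 ⊆ Frac(A)` to a linear map into `A`. -/
noncomputable def myLift {M : Type u} [AddCommGroup M] [Module A M]
    (g : M →ₗ[A] FractionRing A)
    (hg : ∀ m, g m ∈ (1 : Submodule A (FractionRing A))) : M →ₗ[A] A :=
  (LinearEquiv.ofInjective (Algebra.linearMap A (FractionRing A))
      (IsFractionRing.injective A (FractionRing A))).symm.toLinearMap.comp
    (g.codRestrict (LinearMap.range (Algebra.linearMap A (FractionRing A)))
      (fun m => by rw [← Submodule.one_eq_range]; exact hg m))

lemma myLift_spec {M : Type u} [AddCommGroup M] [Module A M]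
    (g : M →ₗ[A] FractionRing A)
    (hg : ∀ m, g m ∈ (1 : Submodule A (FractionRing A))) (m : M) :
    algebraMap A (FractionRing A) (myLift g hg m) = g m := by
  have h1 : ∀ y : LinearMap.range (Algebra.linearMap A (FractionRing A)),
      algebraMap A (FractionRing A) ((LinearEquiv.ofInjective
        (Algebra.linearMap A (FractionRing A))
        (IsFractionRing.injective A (FractionRing A))).symm y) = (y : FractionRing A) := by
    intro y
    have h2 := (LinearEquiv.ofInjective (Algebra.linearMap A (FractionRing A))
        (IsFractionRing.injective A (FractionRing A))).apply_symm_apply y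
    have h3 := congrArg Subtype.val h2
    exact h3
  exact h1 _

lemma repr_spec (I : Ideal A) {a : A} (ha : a ∈ I) (hareg : a ∈ nonZeroDivisors A)
    (f : I →ₗ[A] A) (i : I) :
    (algebraMap A (FractionRing A) (f ⟨a, ha⟩) * invA a hareg) *
      algebraMap A (FractionRing A) (i : A) = algebraMap A (FractionRing A) (f i) := by
  have key : (i : A) * f ⟨a, ha⟩ = a * f i := by
    have h1 : (i : A) • f ⟨a, ha⟩ = f ((i : A) • ⟨a, ha⟩) := (f.map_smul _ _).symm
    have h3 : ((i : A) • (⟨a, ha⟩ : I)) = a • i := by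
      apply Subtype.ext; simp [smul_eq_mul, mul_comm]
    rw [h3, f.map_smul] at h1
    simpa [smul_eq_mul] using h1
  calc (algebraMap A (FractionRing A) (f ⟨a, ha⟩) * invA a hareg) *
        algebraMap A (FractionRing A) (i : A)
      = algebraMap A (FractionRing A) ((i : A) * f ⟨a, ha⟩) * invA a hareg := by
        rw [map_mul]; ring
    _ = algebraMap A (FractionRing A) (a * f i) * invA a hareg := by rw [key]
    _ = algebraMap A (FractionRing A) (f i) *
          (algebraMap A (FractionRing A) a * invA a hareg) := by rw [map_mul]; ring
    _ = algebraMap A (FractionRing A) (f i) := by rw [invA_mul, mul_one]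

lemma key_refl (I : Ideal A) (hrefl : Module.IsReflexive A I) {a : A} (ha : a ∈ I)
    (hareg : a ∈ nonZeroDivisors A) (x : FractionRing A)
    (hx : ∀ y ∈ (1 : Submodule A (FractionRing A)) / I.toFrac,
      x * y ∈ (1 : Submodule A (FractionRing A))) :
    x ∈ I.toFrac := by
  classical
  set c : FractionRing A := x * invA a hareg with hc
  set g : Module.Dual A I →ₗ[A] FractionRing A :=
    (LinearMap.mulLeft A c).comp ((Algebra.linearMap A (FractionRing A)).comp
      (Module.Dual.eval A I ⟨a, ha⟩)) with hgdef
  have hgapp : ∀ f : Module.Dual A I,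
      g f = c * algebraMap A (FractionRing A) (f ⟨a, ha⟩) := fun f => rfl
  have hrepr_mem : ∀ f : Module.Dual A I,
      algebraMap A (FractionRing A) (f ⟨a, ha⟩) * invA a hareg ∈
        (1 : Submodule A (FractionRing A)) / I.toFrac := by
    intro f
    rw [Submodule.mem_div_iff_forall_mul_mem]
    intro y hy
    obtain ⟨i, hi, rfl⟩ := mem_toFrac.mp hy
    rw [repr_spec I ha hareg f ⟨i, hi⟩]
    exact Submodule.mem_one.mpr ⟨f ⟨i, hi⟩, rfl⟩
  have hgmem : ∀ f, g f ∈ (1 : Submodule A (FractionRing A)) := by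
    intro f
    have h4 := hx _ (hrepr_mem f)
    have h5 : x * (algebraMap A (FractionRing A) (f ⟨a, ha⟩) * invA a hareg) = g f := by
      rw [hgapp, hc]; ring
    rwa [h5] at h4
  haveI := hrefl
  obtain ⟨i₀, hi₀⟩ := (Module.bijective_dual_eval A I).surjective (myLift g hgmem)
  have h1 : myLift g hgmem I.subtype = (i₀ : A) := by rw [← hi₀]; rfl
  have h2 := myLift_spec g hgmem I.subtype
  have h3 : g I.subtype = x := by
    rw [hgapp]
    show (x * invA a hareg) * algebraMap A (FractionRing A) a = x
    calc (x * invA a hareg) * algebraMap A (FractionRing A) a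
        = x * (algebraMap A (FractionRing A) a * invA a hareg) := by ring
      _ = x := by rw [invA_mul, mul_one]
  rw [h1, h3] at h2
  exact mem_toFrac.mpr ⟨i₀, i₀.2, h2⟩

lemma trace_mul (I : Ideal A) {y : FractionRing A}
    (hy : y ∈ (1 : Submodule A (FractionRing A)) / I.toFrac) {i : A} (hi : i ∈ I) :
    ∃ t ∈ traceIdeal A I, y * algebraMap A (FractionRing A) i =
      algebraMap A (FractionRing A) t := by
  set g : I →ₗ[A] FractionRing A :=
    (LinearMap.mulLeft A y).comp ((Algebra.linearMap A (FractionRing A)).comp I.subtype)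
    with hgdef
  have hgmem : ∀ m : I, g m ∈ (1 : Submodule A (FractionRing A)) := by
    intro m
    exact (Submodule.mem_div_iff_forall_mul_mem.mp hy) _ (mem_toFrac.mpr ⟨m, m.2, rfl⟩)
  refine ⟨myLift g hgmem ⟨i, hi⟩, ?_, ?_⟩
  · exact (le_iSup (fun f : I →ₗ[A] A => LinearMap.range f) (myLift g hgmem)) ⟨⟨i, hi⟩, rfl⟩
  · exact (myLift_spec g hgmem ⟨i, hi⟩).symm

lemma key_conductor (I : Ideal A) (hrefl : Module.IsReflexive A I) {a : A} (ha : a ∈ I)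
    (hareg : a ∈ nonZeroDivisors A) (hII : I.toFrac / I.toFrac = 1) (x : FractionRing A)
    (hx : ∀ t ∈ traceIdeal A I, x * algebraMap A (FractionRing A) t ∈
      (1 : Submodule A (FractionRing A))) :
    x ∈ (1 : Submodule A (FractionRing A)) := by
  have step : ∀ i ∈ I, x * algebraMap A (FractionRing A) i ∈ I.toFrac := by
    intro i hi
    apply key_refl I hrefl ha hareg
    intro y hy
    obtain ⟨t, htT, hty⟩ := trace_mul I hy hi
    have h6 : x * algebraMap A (FractionRing A) i * y =
        x * algebraMap A (FractionRing A) t := by rw [← hty]; ring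
    rw [h6]; exact hx t htT
  rw [← hII, Submodule.mem_div_iff_forall_mul_mem]
  intro y hy
  obtain ⟨i, hi, rfl⟩ := mem_toFrac.mp hy
  exact step i hi

end FracAux


open Pointwise in
/-- if `I` is a reflexive ideal of a commutative Noetherian ring `A`
containing a nonzerodivisor with `(I : I) = A`, then `grade_A(tr_A(I)) ≥ 2`. -/
theorem grade_traceIdeal_ge_two (A : Type u) [CommRing A] [IsNoetherianRing A]
    (I : Ideal A) (hrefl : Module.IsReflexive A I)
    (hreg : ∃ a ∈ I, a ∈ nonZeroDivisors A)
    (hII : I.toFrac / I.toFrac = 1) :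
    2 ≤ (traceIdeal A I).grade := by
  classical
  obtain ⟨a, ha, hareg⟩ := hreg
  have haT : a ∈ traceIdeal A I :=
    (le_iSup (fun f : I →ₗ[A] A => LinearMap.range f) I.subtype) ⟨⟨a, ha⟩, rfl⟩
  have hB := key_conductor I hrefl ha hareg hII
  have notle : ∀ p ∈ associatedPrimes A (QuotSMulTop a A), ¬ traceIdeal A I ≤ p := by
    rintro p hp' hTp
    obtain ⟨hpp, cbar, hann⟩ := isAssociatedPrime_iff.mp hp'
    obtain ⟨c, rfl⟩ := Submodule.Quotient.mk_surjective _ cbar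
    have hcnotin : c ∉ a • (⊤ : Submodule A A) := by
      intro h
      apply hpp.ne_top
      rw [hann, Ideal.eq_top_iff_one, Submodule.mem_colon_singleton, one_smul,
        Submodule.mem_bot, Submodule.Quotient.mk_eq_zero]
      exact h
    have hx : ∀ t ∈ traceIdeal A I, (algebraMap A (FractionRing A) c * invA a hareg) *
        algebraMap A (FractionRing A) t ∈ (1 : Submodule A (FractionRing A)) := by
      intro t ht
      have htp : t ∈ p := hTp ht
      rw [hann, Submodule.mem_colon_singleton, Submodule.mem_bot, ← Submodule.Quotient.mk_smul,
        Submodule.Quotient.mk_eq_zero] at htp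
      obtain ⟨d, -, hd⟩ := htp
      have hd' : t * c = a * d := by
        simpa [smul_eq_mul, mul_comm] using hd.symm
      have hcalc : (algebraMap A (FractionRing A) c * invA a hareg) *
          algebraMap A (FractionRing A) t = algebraMap A (FractionRing A) d := by
        calc (algebraMap A (FractionRing A) c * invA a hareg) *
              algebraMap A (FractionRing A) t
            = algebraMap A (FractionRing A) (t * c) * invA a hareg := by rw [map_mul]; ring
          _ = algebraMap A (FractionRing A) (a * d) * invA a hareg := by rw [hd']
          _ = algebraMap A (FractionRing A) d *
                (algebraMap A (FractionRing A) a * invA a hareg) := by rw [map_mul]; ring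
          _ = algebraMap A (FractionRing A) d := by rw [invA_mul, mul_one]
      rw [hcalc]
      exact Submodule.mem_one.mpr ⟨d, rfl⟩
    obtain ⟨e, he⟩ := Submodule.mem_one.mp (hB _ hx)
    apply hcnotin
    have hceq : algebraMap A (FractionRing A) c = algebraMap A (FractionRing A) (e * a) := by
      calc algebraMap A (FractionRing A) c
          = algebraMap A (FractionRing A) c *
              (algebraMap A (FractionRing A) a * invA a hareg) := by rw [invA_mul, mul_one]
        _ = (algebraMap A (FractionRing A) c * invA a hareg) *
              algebraMap A (FractionRing A) a := by ring
        _ = algebraMap A (FractionRing A) e * algebraMap A (FractionRing A) a := by rw [he]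
        _ = algebraMap A (FractionRing A) (e * a) := by rw [map_mul]
    have hc2 : c = e * a := IsFractionRing.injective A (FractionRing A) hceq
    exact ⟨e, trivial, by show a • e = c; rw [smul_eq_mul, mul_comm]; exact hc2.symm⟩
  have hfin := my_associatedPrimes_finite A (QuotSMulTop a A)
  have havoid : ∃ b ∈ traceIdeal A I, ∀ p ∈ associatedPrimes A (QuotSMulTop a A), b ∉ p := by
    by_contra hcon
    push_neg at hcon
    have hsub : ((traceIdeal A I : Ideal A) : Set A) ⊆
        ⋃ p ∈ (hfin.toFinset : Set (Ideal A)), ((p : Ideal A) : Set A) := by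
      intro b hb
      obtain ⟨p, hp, hbp⟩ := hcon b hb
      exact Set.mem_biUnion (hfin.mem_toFinset.mpr hp) hbp
    rw [Ideal.subset_union_prime (f := fun p : Ideal A => p) (⊥ : Ideal A) (⊥ : Ideal A)
      (fun p hp _ _ => (hfin.mem_toFinset.mp hp).isPrime)] at hsub
    obtain ⟨p, hps, hTp⟩ := hsub
    exact notle p (hfin.mem_toFinset.mp hps) hTp
  obtain ⟨b, hbT, hbavoid⟩ := havoid
  have hbreg : IsSMulRegular (QuotSMulTop a A) b := by
    by_contra hreg'
    have hmem : b ∈ ({r : A | IsSMulRegular (QuotSMulTop a A) r}ᶜ : Set A) := hreg'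
    rw [← biUnion_associatedPrimes_eq_compl_regular A (QuotSMulTop a A)] at hmem
    obtain ⟨p, hp, hbp⟩ := Set.mem_iUnion₂.mp hmem
    exact hbavoid p hp hbp
  have hareg' : IsSMulRegular A a := by
    intro x y hxy
    simp only [smul_eq_mul] at hxy
    have h7 : (x - y) * a = 0 := by
      have : a * (x - y) = 0 := by rw [mul_sub, hxy, sub_self]
      rwa [mul_comm] at this
    have h8 := mem_nonZeroDivisors_iff_right.mp hareg _ h7
    exact sub_eq_zero.mp h8
  have hwr : RingTheory.Sequence.IsWeaklyRegular A [a, b] :=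
    RingTheory.Sequence.IsWeaklyRegular.cons hareg'
      (RingTheory.Sequence.IsWeaklyRegular.cons hbreg
        (RingTheory.Sequence.IsWeaklyRegular.nil _ _))
  apply le_sSup
  refine ⟨[a, b], by norm_num, ?_, hwr⟩
  intro r hr
  rcases List.mem_pair.mp hr with rfl | rfl
  · exact haT
  · exact hbT
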